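/- Let σ > 0 and let p be the probability density function of the centered Gaussian N(0,σ²I_d) on ℝ^d, p(z) = (2πσ²)^{−d/2} exp(−‖z‖₂²/(2σ²)). Then for every v ∈ ℝ^d, ∫_{ℝ^d} max(p(z) − p(z+v), 0) dz = Φ(‖v‖₂/(2σ)) − Φ(−‖v‖₂/(2σ)). -/

import Mathlib

open MeasureTheory ProbabilityTheory

/-- The standard normal cumulative distribution function. -/
noncomputable def Phi (x : ℝ) : ℝ :=
  (Real.sqrt (2 * Real.pi))⁻¹ * ∫ t in Set.Iic x, Real.exp (-t ^ 2 / 2)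


section Aux
open Real Set

lemma my_comp_mul_left_Iic (g : ℝ → ℝ) (a : ℝ) {b : ℝ} (hb : 0 < b) :
    (∫ x in Iic a, g (b * x)) = b⁻¹ * ∫ x in Iic (b * a), g x := by
  have h1 : (∫ x in Ioi (-a), g (b * -x)) = ∫ x in Iic (-(-a)), g (b * x) :=
    integral_comp_neg_Ioi (-a) (fun x => g (b * x))
  rw [neg_neg] at h1
  have h2 : (∫ x in Ioi (-a), (fun y => g (-y)) (b * x)) = b⁻¹ • ∫ x in Ioi (b * (-a)), g (-x) :=
    integral_comp_mul_left_Ioi (fun y => g (-y)) (-a) hb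
  have h3 : (∫ x in Ioi (b * (-a)), g (-x)) = ∫ x in Iic (-(b * (-a))), g x :=
    integral_comp_neg_Ioi _ g
  rw [← h1]
  simp only [mul_neg, neg_neg] at h2 h3 ⊢
  rw [h2, h3, smul_eq_mul]

lemma gauss_iic {σ : ℝ} (hσ : 0 < σ) (a : ℝ) :
    (∫ t in Iic a, (2 * π * σ ^ 2) ^ (-(1:ℝ)/2) * Real.exp (-t ^ 2 / (2 * σ ^ 2)))
      = Phi (a / σ) := by
  have h2π : (0:ℝ) < 2 * π := by positivity
  have hC : (2 * π * σ ^ 2) ^ (-(1:ℝ)/2) = (Real.sqrt (2 * π))⁻¹ * σ⁻¹ := by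
    rw [neg_div, Real.rpow_neg (by positivity), ← Real.sqrt_eq_rpow,
      Real.sqrt_mul h2π.le, Real.sqrt_sq hσ.le, mul_inv]
  have hexp : ∀ t : ℝ, Real.exp (-t ^ 2 / (2 * σ ^ 2)) = Real.exp (-(σ⁻¹ * t) ^ 2 / 2) := by
    intro t; congr 1; rw [mul_pow, inv_pow, inv_mul_eq_div]; ring
  simp_rw [hexp, integral_const_mul]
  rw [my_comp_mul_left_Iic (fun t => Real.exp (-t ^ 2 / 2)) a (inv_pos.mpr hσ), hC, Phi]
  rw [inv_inv]
  field_simp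

lemma gauss_ici {σ : ℝ} (hσ : 0 < σ) (a : ℝ) :
    (∫ t in Ici a, (2 * π * σ ^ 2) ^ (-(1:ℝ)/2) * Real.exp (-t ^ 2 / (2 * σ ^ 2)))
      = Phi (-a / σ) := by
  have h1 : (∫ t in Ici a, (2 * π * σ ^ 2) ^ (-(1:ℝ)/2) * Real.exp (-t ^ 2 / (2 * σ ^ 2)))
      = ∫ t in Ioi a, (2 * π * σ ^ 2) ^ (-(1:ℝ)/2) * Real.exp (-t ^ 2 / (2 * σ ^ 2)) :=
    integral_Ici_eq_integral_Ioi
  have h2 := integral_comp_neg_Ioi a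
    (fun t => (2 * π * σ ^ 2) ^ (-(1:ℝ)/2) * Real.exp (-t ^ 2 / (2 * σ ^ 2)))
  simp only [neg_sq] at h2
  rw [h1, h2, gauss_iic hσ]

noncomputable def gs (σ t : ℝ) : ℝ := (2 * π * σ ^ 2) ^ (-(1:ℝ)/2) * rexp (-t ^ 2 / (2 * σ ^ 2))

lemma gs_nonneg (σ t : ℝ) : 0 ≤ gs σ t := by
  unfold gs; positivity

lemma gs_eq (σ : ℝ) : gs σ = fun t => (2 * π * σ ^ 2) ^ (-(1:ℝ)/2) * rexp (-(2 * σ ^ 2)⁻¹ * t ^ 2) := by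
  funext t; unfold gs; congr 1; ring

lemma gs_integrable {σ : ℝ} (hσ : 0 < σ) : Integrable (gs σ) := by
  rw [gs_eq]
  exact (integrable_exp_neg_mul_sq (by positivity)).const_mul _

lemma gs_total {σ : ℝ} (hσ : 0 < σ) : ∫ t, gs σ t = 1 := by
  have h2π : (0:ℝ) < 2 * π := by positivity
  rw [gs_eq, integral_const_mul, integral_gaussian]
  rw [show π / (2 * σ ^ 2)⁻¹ = 2 * π * σ ^ 2 by field_simp]
  rw [neg_div, Real.rpow_neg (by positivity), ← Real.sqrt_eq_rpow]
  rw [inv_mul_cancel₀ (by positivity)]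

lemma gs_iic {σ : ℝ} (hσ : 0 < σ) (a : ℝ) : (∫ t in Iic a, gs σ t) = Phi (a / σ) := by
  simpa [gs] using gauss_iic hσ a

lemma gs_ici {σ : ℝ} (hσ : 0 < σ) (a : ℝ) : (∫ t in Ici a, gs σ t) = Phi (-a / σ) := by
  simpa [gs] using gauss_ici hσ a

lemma integral_Ici_add_right (g : ℝ → ℝ) (a c : ℝ) :
    (∫ x in Ici a, g (x + c)) = ∫ x in Ici (a + c), g x := by
  have A : MeasurableEmbedding (fun x : ℝ => x + c) :=
    (Homeomorph.addRight c).isClosedEmbedding.measurableEmbedding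
  have h := A.setIntegral_map (μ := volume) g (Ici (a + c))
  rw [map_add_right_eq_self volume c] at h
  have hpre : (fun x : ℝ => x + c) ⁻¹' Ici (a + c) = Ici a := by
    ext x; simp
  rw [hpre] at h
  exact h.symm

lemma gs_le_gs {σ : ℝ} (hσ : 0 < σ) {s t : ℝ} (h : s ^ 2 ≤ t ^ 2) : gs σ t ≤ gs σ s := by
  unfold gs
  have h1 : rexp (-t ^ 2 / (2 * σ ^ 2)) ≤ rexp (-s ^ 2 / (2 * σ ^ 2)) := by
    apply Real.exp_le_exp.mpr
    apply div_le_div_of_nonneg_right _ (by positivity)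
    · linarith
  exact mul_le_mul_of_nonneg_left h1 (by positivity)

lemma oneD {σ c : ℝ} (hσ : 0 < σ) (hc : 0 < c) :
    (∫ t, max (gs σ t - gs σ (t + c)) 0) = Phi (c / (2 * σ)) - Phi (-c / (2 * σ)) := by
  have hmax : (fun t => max (gs σ t - gs σ (t + c)) 0)
      = (Ici (-(c/2))).indicator (fun t => gs σ t - gs σ (t + c)) := by
    funext t
    rcases le_or_gt (-(c/2)) t with h | h
    · rw [Set.indicator_of_mem (mem_Ici.mpr h)]
      exact max_eq_left (sub_nonneg.mpr (gs_le_gs hσ (by nlinarith)))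
    · rw [Set.indicator_of_notMem (by simpa using not_le.mpr h)]
      exact max_eq_right (sub_nonpos.mpr (gs_le_gs hσ (by nlinarith)))
  rw [hmax, integral_indicator measurableSet_Ici,
    integral_sub (gs_integrable hσ).integrableOn ((gs_integrable hσ).comp_add_right c).integrableOn,
    integral_Ici_add_right (gs σ) (-(c/2)) c, show -(c/2) + c = c/2 by ring,
    gs_ici hσ, gs_ici hσ]
  congr 2 <;> ring

lemma gs_prod {σ : ℝ} (hσ : 0 < σ) {n : ℕ} (z : EuclideanSpace ℝ (Fin n)) :
    (2 * π * σ ^ 2) ^ (-(n : ℝ) / 2) * rexp (-‖z‖ ^ 2 / (2 * σ ^ 2)) = ∏ i, gs σ (z i) := by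
  have hnorm : ‖z‖ ^ 2 = ∑ i, (z i) ^ 2 := by
    rw [EuclideanSpace.norm_eq, Real.sq_sqrt (by positivity)]
    simp [Real.norm_eq_abs, sq_abs]
  have hC : (2 * π * σ ^ 2) ^ (-(n : ℝ) / 2) = ((2 * π * σ ^ 2) ^ (-(1:ℝ)/2)) ^ n := by
    rw [← Real.rpow_natCast ((2 * π * σ ^ 2) ^ (-(1:ℝ)/2)) n, ← Real.rpow_mul (by positivity)]
    congr 1
    ring
  have hexp : rexp (-‖z‖ ^ 2 / (2 * σ ^ 2)) = ∏ i, rexp (-(z i) ^ 2 / (2 * σ ^ 2)) := by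
    rw [← Real.exp_sum]
    congr 1
    rw [hnorm, ← Finset.sum_div, ← Finset.sum_neg_distrib]
  unfold gs
  rw [hC, hexp, Finset.prod_mul_distrib, Finset.prod_const, Finset.card_univ, Fintype.card_fin]


/-- for the Gaussian density `p` on `ℝ^d`,
`∫ (p(z) − p(z+v))₊ dz = Φ(‖v‖/(2σ)) − Φ(−‖v‖/(2σ))`. -/
theorem gaussian_positive_part_integral {d : ℕ} (σ : ℝ) (hσ : 0 < σ)
    (p : EuclideanSpace ℝ (Fin d) → ℝ)
    (hp : ∀ z, p z = (2 * Real.pi * σ ^ 2) ^ (-(d : ℝ) / 2) *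
      Real.exp (-‖z‖ ^ 2 / (2 * σ ^ 2))) :
    ∀ v : EuclideanSpace ℝ (Fin d),
      (∫ z, max (p z - p (z + v)) 0) = Phi (‖v‖ / (2 * σ)) - Phi (-‖v‖ / (2 * σ)) := by
  intro v
  rcases eq_or_ne v 0 with rfl | hv
  · simp only [add_zero, sub_self, max_self, integral_zero, norm_zero, zero_div, neg_zero]
  · cases d with
    | zero => exact absurd (by ext i; exact Fin.elim0 i) hv
    | succ m =>
      have hc : 0 < ‖v‖ := norm_pos_iff.mpr hv
      set c : ℝ := ‖v‖ with hcdef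
      set w : EuclideanSpace ℝ (Fin (m+1)) := c • EuclideanSpace.single 0 1 with hw
      have hwnorm : ‖w‖ = c := by
        rw [hw, norm_smul, EuclideanSpace.norm_single, norm_one, mul_one,
          Real.norm_eq_abs, abs_of_pos hc]
      set e := Submodule.reflection (ℝ ∙ (v - w))ᗮ with he
      have hev : e v = w := Submodule.reflection_sub (by rw [hwnorm])
      have hps : ∀ x, p (e.symm x) = p x := by
        intro x; rw [hp, hp, e.symm.norm_map]
      have step1 : (∫ z, max (p z - p (z + v)) 0) = ∫ z, max (p z - p (z + w)) 0 := by
        rw [← (e.symm.measurePreserving).integral_comp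
          e.symm.toHomeomorph.measurableEmbedding (fun z => max (p z - p (z + v)) 0)]
        congr 1; funext z
        have hzw : e.symm z + v = e.symm (z + w) := by
          rw [map_add, ← hev, LinearIsometryEquiv.symm_apply_apply]
        rw [hps, hzw, hps]
      have key : ∀ x : Fin (m+1) → ℝ,
          max ((∏ i, gs σ (x i)) - ∏ i, gs σ (x i + (if i = (0 : Fin (m+1)) then c else 0))) 0
            = ∏ i, (if i = (0 : Fin (m+1)) then max (gs σ (x i) - gs σ (x i + c)) 0
                else gs σ (x i)) := by
        intro x
        rw [Fin.prod_univ_succ, Fin.prod_univ_succ, Fin.prod_univ_succ]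
        simp only [eq_self_iff_true, if_true, Fin.succ_ne_zero, if_false, add_zero]
        have hQ : (0:ℝ) ≤ ∏ j : Fin m, gs σ (x j.succ) :=
          Finset.prod_nonneg fun j _ => gs_nonneg σ _
        rw [← sub_mul, max_mul_of_nonneg _ _ hQ, zero_mul]
      have step2 : (∫ z : EuclideanSpace ℝ (Fin (m+1)), max (p z - p (z + w)) 0)
          = ∫ x : Fin (m+1) → ℝ, ∏ i,
              (fun (i : Fin (m+1)) (t : ℝ) =>
                if i = (0 : Fin (m+1)) then max (gs σ t - gs σ (t + c)) 0 else gs σ t) i (x i) := by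
        rw [← (MeasurePreserving.symm _
          (EuclideanSpace.volume_preserving_symm_measurableEquiv_toLp (Fin (m+1)))).integral_comp'
          (fun z => max (p z - p (z + w)) 0)]
        congr 1; funext x
        simp only [hp, gs_prod hσ]
        have h1 : ∀ i, ((MeasurableEquiv.toLp 2 (Fin (m+1) → ℝ)).symm.symm x) i = x i :=
          fun _ => rfl
        have h2 : ∀ i, ((MeasurableEquiv.toLp 2 (Fin (m+1) → ℝ)).symm.symm x + w) i
            = x i + (if i = (0 : Fin (m+1)) then c else 0) := by
          intro i
          rw [PiLp.add_apply, h1, hw, PiLp.smul_apply, EuclideanSpace.single_apply,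
            smul_eq_mul, mul_ite, mul_one, mul_zero]
        simp only [h1, h2]
        exact key x
      rw [step1, step2]
      refine (MeasureTheory.integral_fintype_prod_eq_prod (ι := Fin (m+1))
        (fun (i : Fin (m+1)) (t : ℝ) =>
          if i = (0 : Fin (m+1)) then max (gs σ t - gs σ (t + c)) 0 else gs σ t)).trans ?_
      rw [Fin.prod_univ_succ]
      simp only [eq_self_iff_true, if_true, Fin.succ_ne_zero, if_false]
      rw [oneD hσ hc]
      simp only [gs_total hσ]
      simp

end Aux
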